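/- For n ≥ 2, the number of derangements D_n equals Σ_π 2^{dd(π)}, where the sum is over permutations π of [n] with no double ascents whose descent word starts and ends with a descent, and dd(π) is the number of double descents of π. -/

import Mathlib

open Finset
open scoped Classical

def SparseF (B : Finset ℕ) : Prop := ∀ i ∈ B, i + 1 ∉ B

/-- shift a finset up by k -/
def shUp (k : ℕ) (A : Finset ℕ) : Finset ℕ := A.image (· + k)

def shDn (k : ℕ) (A : Finset ℕ) : Finset ℕ := A.image (· - k)

lemma mem_shUp {k x : ℕ} {A : Finset ℕ} : x ∈ shUp k A ↔ ∃ a ∈ A, a + k = x := by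
  simp [shUp]

lemma shDn_shUp (k : ℕ) (A : Finset ℕ) : shDn k (shUp k A) = A := by
  rw [shDn, shUp, Finset.image_image]
  have : ((fun x => x - k) ∘ fun x => x + k) = id := by
    funext x; simp
  rw [this, Finset.image_id]

lemma card_shUp (k : ℕ) (A : Finset ℕ) : (shUp k A).card = A.card :=
  Finset.card_image_of_injective _ (add_left_injective k)

noncomputable def Efun (n : ℕ) (A : Finset ℕ) : ℕ :=
  if h : A.Nonempty then
    (A.min' h) * Efun (n - (A.min' h + 1)) (shDn (A.min' h + 1) (A.erase (A.min' h)))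
  else n - 1
termination_by A.card
decreasing_by
  exact lt_of_le_of_lt (Finset.card_image_le)
    (Finset.card_lt_card (Finset.erase_ssubset (Finset.min'_mem A h)))

lemma Efun_empty (n : ℕ) : Efun n ∅ = n - 1 := by
  rw [Efun]; simp

lemma Efun_of_nonempty {n : ℕ} {A : Finset ℕ} (h : A.Nonempty) :
    Efun n A = (A.min' h) * Efun (n - (A.min' h + 1)) (shDn (A.min' h + 1) (A.erase (A.min' h))) := by
  rw [Efun]; simp [h]

lemma min'_insert_shUp (t : ℕ) (A' : Finset ℕ) :
    (insert t (shUp (t+1) A')).min' ⟨t, mem_insert_self _ _⟩ = t := by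
  apply le_antisymm
  · exact Finset.min'_le _ _ (mem_insert_self _ _)
  · apply Finset.le_min'
    intro y hy
    rcases Finset.mem_insert.1 hy with rfl | hy
    · exact le_refl _
    · rcases mem_shUp.1 hy with ⟨a, _, rfl⟩; omega

lemma Efun_insert_shUp (n t : ℕ) (A' : Finset ℕ) :
    Efun n (insert t (shUp (t+1) A')) = t * Efun (n - t - 1) A' := by
  have hne : (insert t (shUp (t+1) A')).Nonempty := ⟨t, mem_insert_self _ _⟩
  rw [Efun_of_nonempty hne]
  have hmin : (insert t (shUp (t+1) A')).min' hne = t := min'_insert_shUp t A'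
  have htn : t ∉ shUp (t+1) A' := by
    intro h; rcases mem_shUp.1 h with ⟨a, _, h⟩; omega
  rw [hmin, Finset.erase_insert htn, shDn_shUp]
  have : n - (t + 1) = n - t - 1 := by omega
  rw [this]

lemma Efun_zero_mem {n : ℕ} {A : Finset ℕ} (h : 0 ∈ A) : Efun n A = 0 := by
  have hne : A.Nonempty := ⟨0, h⟩
  rw [Efun_of_nonempty hne]
  have : A.min' hne = 0 := le_antisymm (Finset.min'_le _ _ h) (Nat.zero_le _)
  rw [this, Nat.zero_mul]

lemma Efun_adj_mem_aux : ∀ (c : ℕ) {n i : ℕ} {A : Finset ℕ}, A.card = c →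
    i ∈ A → i + 1 ∈ A → Efun n A = 0 := by
  intro c
  induction c using Nat.strong_induction_on with
  | _ c IH =>
    intro n i A hc h1 h2
    have hne : A.Nonempty := ⟨i, h1⟩
    set t := A.min' hne with ht
    have hti : t ≤ i := Finset.min'_le _ _ h1
    rw [Efun_of_nonempty hne, ← ht]
    rcases eq_or_lt_of_le hti with heq | hlt
    · -- t = i, so i+1 ∈ erase, shifts to 0
      have h0 : 0 ∈ shDn (t+1) (A.erase t) := by
        apply Finset.mem_image.2
        exact ⟨i+1, Finset.mem_erase.2 ⟨by omega, h2⟩, by omega⟩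
      rw [Efun_zero_mem h0]; ring
    · -- t < i : adjacency survives
      have hm1 : i - (t+1) ∈ shDn (t+1) (A.erase t) :=
        Finset.mem_image.2 ⟨i, Finset.mem_erase.2 ⟨by omega, h1⟩, rfl⟩
      have hm2 : (i - (t+1)) + 1 ∈ shDn (t+1) (A.erase t) :=
        Finset.mem_image.2 ⟨i+1, Finset.mem_erase.2 ⟨by omega, h2⟩, by omega⟩
      have hcard : (shDn (t+1) (A.erase t)).card < c := by
        rw [← hc]
        exact lt_of_le_of_lt (Finset.card_image_le)
          (Finset.card_lt_card (Finset.erase_ssubset (Finset.min'_mem A hne)))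
      rw [IH _ hcard rfl hm1 hm2]; ring

lemma Efun_adj_mem {n i : ℕ} {A : Finset ℕ} (h1 : i ∈ A) (h2 : i + 1 ∈ A) : Efun n A = 0 :=
  Efun_adj_mem_aux A.card rfl h1 h2

lemma Efun_top_mem_aux : ∀ (c : ℕ) {n : ℕ} {A : Finset ℕ}, A.card = c → 2 ≤ n →
    A ⊆ range (n-1) → n - 2 ∈ A → Efun n A = 0 := by
  intro c
  induction c using Nat.strong_induction_on with
  | _ c IH =>
    intro n A hc hn hA h
    have hne : A.Nonempty := ⟨n-2, h⟩
    set t := A.min' hne with ht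
    have htn : t ≤ n - 2 := Finset.min'_le _ _ h
    rw [Efun_of_nonempty hne, ← ht]
    rcases eq_or_lt_of_le htn with heq | hlt
    · -- t = n - 2 : A = {n-2}, remainder empty, Efun 1 ∅ = 0
      have hAe : A.erase t = ∅ := by
        apply Finset.eq_empty_of_forall_notMem
        intro x hx
        rcases Finset.mem_erase.1 hx with ⟨hxne, hxA⟩
        have := Finset.mem_range.1 (hA hxA)
        have := Finset.min'_le _ _ hxA
        omega
      rw [hAe]
      have : shDn (t+1) (∅ : Finset ℕ) = ∅ := rfl
      rw [this, Efun_empty]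
      have : n - (t + 1) - 1 = 0 := by omega
      rw [this]; ring
    · -- t < n-2 : recurse
      have hn' : 2 ≤ n - (t+1) := by omega
      have hsub : shDn (t+1) (A.erase t) ⊆ range (n - (t+1) - 1) := by
        intro y hy
        rcases Finset.mem_image.1 hy with ⟨x, hx, rfl⟩
        have := Finset.mem_range.1 (hA (Finset.mem_erase.1 hx).2)
        have := Finset.min'_le _ _ (Finset.mem_erase.1 hx).2
        have hxt : x ≠ t := (Finset.mem_erase.1 hx).1
        apply Finset.mem_range.2
        omega
      have hmem : (n - (t+1)) - 2 ∈ shDn (t+1) (A.erase t) := by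
        apply Finset.mem_image.2
        exact ⟨n-2, Finset.mem_erase.2 ⟨by omega, h⟩, by omega⟩
      have hcard : (shDn (t+1) (A.erase t)).card < c := by
        rw [← hc]
        exact lt_of_le_of_lt (Finset.card_image_le)
          (Finset.card_lt_card (Finset.erase_ssubset (Finset.min'_mem A hne)))
      rw [IH _ hcard rfl hn' hsub hmem]; ring

lemma Efun_top_mem {n : ℕ} {A : Finset ℕ} (hn : 2 ≤ n) (hA : A ⊆ range (n-1))
    (h : n - 2 ∈ A) : Efun n A = 0 :=
  Efun_top_mem_aux A.card rfl hn hA h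

/-- min with default 0 -/
noncomputable def mn (A : Finset ℕ) : ℕ := WithBot.unbotD 0 A.min

lemma mn_eq {A : Finset ℕ} (h : A.Nonempty) : mn A = A.min' h := by
  rw [mn, ← Finset.coe_min' h]
  rfl

lemma shUp_shDn {k : ℕ} {X : Finset ℕ} (h : ∀ x ∈ X, k ≤ x) : shUp k (shDn k X) = X := by
  rw [shUp, shDn, Finset.image_image]
  ext x
  simp only [Finset.mem_image, Function.comp_apply]
  constructor
  · rintro ⟨a, ha, rfl⟩
    have := h a ha
    have : a - k + k = a := by omega
    rwa [this]
  · intro hx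
    exact ⟨x, hx, by have := h x hx; omega⟩

lemma sum_powerset_peel (m : ℕ) (f : Finset ℕ → ℕ) :
    ∑ A ∈ (range m).powerset, f A
      = f ∅ + ∑ t ∈ range m, ∑ A' ∈ (range (m - t - 1)).powerset,
          f (insert t (shUp (t+1) A')) := by
  have hsplit : (range m).powerset = insert ∅ ((range m).powerset.filter (fun A => A.Nonempty)) := by
    ext A
    simp only [Finset.mem_insert, Finset.mem_filter, Finset.mem_powerset]
    constructor
    · intro h
      rcases A.eq_empty_or_nonempty with rfl | hne
      · exact Or.inl rfl
      · exact Or.inr ⟨h, hne⟩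
    · rintro (rfl | ⟨h, _⟩)
      · exact Finset.empty_subset _
      · exact h
  rw [hsplit, Finset.sum_insert (by simp [Finset.not_nonempty_empty])]
  congr 1
  rw [← Finset.sum_fiberwise_of_maps_to (g := mn)
    (t := range m) ?hmaps (fun A => f A)]
  case hmaps =>
    intro A hA
    rcases Finset.mem_filter.1 hA with ⟨hsub, hne⟩
    rw [Finset.mem_range, mn_eq hne]
    exact Finset.mem_range.1 (Finset.mem_powerset.1 hsub (Finset.min'_mem A hne))
  apply Finset.sum_congr rfl
  intro t ht
  have htm := Finset.mem_range.1 ht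
  apply Finset.sum_nbij' (i := fun A => shDn (t+1) (A.erase t))
    (j := fun A' => insert t (shUp (t+1) A'))
  · -- hi
    intro A hA
    rcases Finset.mem_filter.1 hA with ⟨hA', hmnt⟩
    rcases Finset.mem_filter.1 hA' with ⟨hsub, hne⟩
    rw [mn_eq hne] at hmnt
    apply Finset.mem_powerset.2
    intro y hy
    rcases Finset.mem_image.1 hy with ⟨x, hx, rfl⟩
    rcases Finset.mem_erase.1 hx with ⟨hxt, hxA⟩
    have h1 : x < m := Finset.mem_range.1 (Finset.mem_powerset.1 hsub hxA)
    have h2 : t ≤ x := hmnt ▸ Finset.min'_le _ _ hxA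
    exact Finset.mem_range.2 (by omega)
  · -- hj
    intro A' hA'
    have hsub := Finset.mem_powerset.1 hA'
    apply Finset.mem_filter.2
    constructor
    · apply Finset.mem_filter.2
      constructor
      · apply Finset.mem_powerset.2
        intro x hx
        rcases Finset.mem_insert.1 hx with rfl | hx
        · exact ht
        · rcases mem_shUp.1 hx with ⟨a, ha, rfl⟩
          have := Finset.mem_range.1 (hsub ha)
          exact Finset.mem_range.2 (by omega)
      · exact ⟨t, Finset.mem_insert_self _ _⟩
    · rw [mn_eq ⟨t, Finset.mem_insert_self _ _⟩]
      exact min'_insert_shUp t A'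
  · -- left inverse
    intro A hA
    rcases Finset.mem_filter.1 hA with ⟨hA', hmnt⟩
    rcases Finset.mem_filter.1 hA' with ⟨_, hne⟩
    rw [mn_eq hne] at hmnt
    rw [shUp_shDn (by
      intro x hx
      rcases Finset.mem_erase.1 hx with ⟨hxt, hxA⟩
      have := hmnt ▸ Finset.min'_le _ _ hxA
      omega)]
    rw [Finset.insert_erase (hmnt ▸ Finset.min'_mem A hne)]
  · -- right inverse
    intro A' hA'
    have htn : t ∉ shUp (t+1) A' := by
      intro h; rcases mem_shUp.1 h with ⟨a, _, h⟩; omega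
    rw [Finset.erase_insert htn, shDn_shUp]
  · -- values
    intro A hA
    rcases Finset.mem_filter.1 hA with ⟨hA', hmnt⟩
    rcases Finset.mem_filter.1 hA' with ⟨_, hne⟩
    rw [mn_eq hne] at hmnt
    congr 1
    rw [shUp_shDn (by
      intro x hx
      rcases Finset.mem_erase.1 hx with ⟨hxt, hxA⟩
      have := hmnt ▸ Finset.min'_le _ _ hxA
      omega)]
    rw [Finset.insert_erase (hmnt ▸ Finset.min'_mem A hne)]

lemma geom (m : ℕ) : (∑ t ∈ range (m+1), t * 2^(m - t)) + m + 2 = 2^(m+1) := by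
  induction m with
  | zero => simp
  | succ m ih =>
    rw [Finset.sum_range_succ]
    have h1 : ∑ t ∈ range (m+1), t * 2 ^ (m + 1 - t)
        = 2 * ∑ t ∈ range (m+1), t * 2 ^ (m - t) := by
      rw [Finset.mul_sum]
      apply Finset.sum_congr rfl
      intro t ht
      have := Finset.mem_range.1 ht
      have he : m + 1 - t = (m - t) + 1 := by omega
      rw [he, pow_succ]; ring
    rw [h1]
    have : 2 ^ (m + 1 - (m + 1)) = 1 := by simp
    rw [this]
    omega

lemma Ifun (E : ℕ) : ∀ b, 1 ≤ b → b ≤ E + 2 →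
    (∑ t ∈ range (b-1), t * 2^(E - t)) + b * 2^(E + 2 - b) = 2^(E+1) := by
  intro b
  induction b with
  | zero => omega
  | succ b ih =>
    intro _ hb2
    rcases Nat.eq_zero_or_pos b with rfl | hb
    · have h1 : E + 2 - 1 = E + 1 := by omega
      simp [h1]
    · have ih' := ih hb (by omega)
      have hr : b + 1 - 1 = (b - 1) + 1 := by omega
      rw [hr, Finset.sum_range_succ]
      have he1 : E - (b - 1) = E + 1 - b := by omega
      have he2 : E + 2 - b = (E + 1 - b) + 1 := by omega
      have he3 : E + 2 - (b + 1) = E + 1 - b := by omega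
      rw [he1, he3]
      have key : 2 ^ (E + 2 - b) = 2 ^ (E + 1 - b) * 2 := by rw [he2, pow_succ]
      rw [key] at ih'
      have hexp : (b-1) * 2^(E+1-b) + (b+1) * 2^(E+1-b) = b * (2^(E+1-b) * 2) := by
        have h2b : b - 1 + (b+1) = 2 * b := by omega
        calc (b-1) * 2^(E+1-b) + (b+1) * 2^(E+1-b) = ((b-1) + (b+1)) * 2^(E+1-b) := by ring
        _ = 2 * b * 2^(E+1-b) := by rw [h2b]
        _ = b * (2^(E+1-b) * 2) := by ring
      omega

noncomputable def Tsum (n : ℕ) (B : Finset ℕ) : ℕ :=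
  ∑ A ∈ (range (n-1)).powerset, (if B ⊆ A then Efun n A else 0)

lemma Tsum_zero_mem {m : ℕ} {B : Finset ℕ} (h : 0 ∈ B) : Tsum m B = 0 := by
  apply Finset.sum_eq_zero
  intro A _
  split
  · exact Efun_zero_mem (by tauto)
  · rfl

lemma subset_insert_shUp {B : Finset ℕ} {t : ℕ} {A' : Finset ℕ} :
    B ⊆ insert t (shUp (t+1) A') ↔
      ((∀ x ∈ B, x = t ∨ t+1 ≤ x) ∧ shDn (t+1) (B.erase t) ⊆ A') := by
  constructor
  · intro h
    constructor
    · intro x hx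
      rcases Finset.mem_insert.1 (h hx) with rfl | hx'
      · exact Or.inl rfl
      · rcases mem_shUp.1 hx' with ⟨a, _, rfl⟩; omega
    · intro y hy
      rcases Finset.mem_image.1 hy with ⟨x, hx, rfl⟩
      rcases Finset.mem_erase.1 hx with ⟨hxt, hxB⟩
      rcases Finset.mem_insert.1 (h hxB) with rfl | hx'
      · omega
      · rcases mem_shUp.1 hx' with ⟨a, ha, rfl⟩
        have : a + (t+1) - (t+1) = a := by omega
        rwa [this]
  · rintro ⟨h1, h2⟩ x hx
    rcases h1 x hx with rfl | hx'
    · exact Finset.mem_insert_self _ _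
    · apply Finset.mem_insert.2
      right
      apply mem_shUp.2
      refine ⟨x - (t+1), h2 (Finset.mem_image.2 ⟨x, Finset.mem_erase.2 ⟨by omega, hx⟩, rfl⟩), by omega⟩

lemma inner_eval (n t : ℕ) (B : Finset ℕ) (hcond : ∀ x ∈ B, x = t ∨ t+1 ≤ x) :
    (∑ A' ∈ (range (n - 1 - t - 1)).powerset,
      if B ⊆ insert t (shUp (t+1) A') then Efun n (insert t (shUp (t+1) A')) else 0)
    = t * Tsum (n - t - 1) (shDn (t+1) (B.erase t)) := by
  rw [Tsum, Finset.mul_sum]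
  have hr : n - t - 1 - 1 = n - 1 - t - 1 := by omega
  rw [hr]
  apply Finset.sum_congr rfl
  intro A' _
  rw [Efun_insert_shUp]
  have : (B ⊆ insert t (shUp (t+1) A')) ↔ shDn (t+1) (B.erase t) ⊆ A' := by
    rw [subset_insert_shUp]
    exact and_iff_right hcond
  rw [if_congr this rfl rfl, mul_ite, mul_zero]

lemma sparse_bound {n : ℕ} {B : Finset ℕ} (hB : B ⊆ range (n-1)) (hsp : SparseF B)
    (htop : n - 2 ∉ B) (hne : B.Nonempty) (hn : 2 ≤ n) :
    B.min' hne + 2 * B.card ≤ n - 1 := by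
  set b := B.min' hne with hb
  have hdisj : Disjoint B (shUp 1 B) := by
    rw [Finset.disjoint_left]
    intro x hx hx'
    rcases mem_shUp.1 hx' with ⟨a, ha, rfl⟩
    exact hsp a ha hx
  have hsub : B ∪ shUp 1 B ⊆ Finset.Icc b (n-2) := by
    intro x hx
    rcases Finset.mem_union.1 hx with hx | hx
    · have h1 : b ≤ x := Finset.min'_le _ _ hx
      have h2 : x < n - 1 := Finset.mem_range.1 (hB hx)
      exact Finset.mem_Icc.2 ⟨h1, by omega⟩
    · rcases mem_shUp.1 hx with ⟨a, ha, rfl⟩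
      have h1 : b ≤ a := Finset.min'_le _ _ ha
      have h2 : a < n - 1 := Finset.mem_range.1 (hB ha)
      have h3 : a ≠ n - 2 := fun h => htop (h ▸ ha)
      exact Finset.mem_Icc.2 ⟨by omega, by omega⟩
  have hcard := Finset.card_le_card hsub
  rw [Finset.card_union_of_disjoint hdisj, card_shUp, Nat.card_Icc] at hcard
  have hble : b < n - 1 := Finset.mem_range.1 (hB (Finset.min'_mem B hne))
  omega

lemma card_shDn_of_ge {k : ℕ} {X : Finset ℕ} (h : ∀ x ∈ X, k ≤ x) :
    (shDn k X).card = X.card :=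
  Finset.card_image_of_injOn (fun a ha b hb hab => by
    have := h a ha; have := h b hb; omega)

lemma sparse_shDn {k : ℕ} {X : Finset ℕ} (h : ∀ x ∈ X, k ≤ x) (hsp : SparseF X) :
    SparseF (shDn k X) := by
  intro y hy hy1
  rcases Finset.mem_image.1 hy with ⟨x1, hx1, he1⟩
  rcases Finset.mem_image.1 hy1 with ⟨x2, hx2, he2⟩
  have h1 := h x1 hx1
  have h2 := h x2 hx2
  have : x2 = x1 + 1 := by omega
  exact hsp x1 hx1 (this ▸ hx2)

lemma Tsum_one (B : Finset ℕ) : Tsum 1 B = 0 := by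
  rw [Tsum]
  have : (1:ℕ) - 1 = 0 := rfl
  rw [this, Finset.range_zero, Finset.powerset_empty, Finset.sum_singleton]
  split
  · rw [Efun_empty]
  · rfl

lemma dagger : ∀ n B, 2 ≤ n → B ⊆ range (n-1) → SparseF B → 0 ∉ B → n - 2 ∉ B →
    Tsum n B = 2 ^ (n - 2 - 2 * B.card) := by
  intro n
  induction n using Nat.strong_induction_on with
  | _ n IH =>
  intro B hn hB hsp h0 htop
  rw [Tsum, sum_powerset_peel]
  rcases B.eq_empty_or_nonempty with rfl | hne
  · -- B = ∅
    rw [if_pos (Finset.Subset.refl _), Efun_empty, Finset.card_empty, Nat.mul_zero, Nat.sub_zero]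
    have hsum : ∀ t ∈ range (n-1),
        (∑ A' ∈ (range (n - 1 - t - 1)).powerset,
          if (∅ : Finset ℕ) ⊆ insert t (shUp (t+1) A')
            then Efun n (insert t (shUp (t+1) A')) else 0)
        = if t + 3 ≤ n then t * 2^(n - 3 - t) else 0 := by
      intro t ht
      have htr := Finset.mem_range.1 ht
      rw [inner_eval n t ∅ (by simp)]
      rw [Finset.erase_empty]
      have hsh : shDn (t+1) (∅ : Finset ℕ) = ∅ := rfl
      rw [hsh]
      by_cases h3 : t + 3 ≤ n
      · rw [if_pos h3]
        rw [IH (n - t - 1) (by omega) ∅ (by omega) (Finset.empty_subset _)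
          (by intro i hi h'; simp at hi) (by simp) (by simp)]
        rw [Finset.card_empty, Nat.mul_zero, Nat.sub_zero]
        have hee : n - t - 1 - 2 = n - 3 - t := by omega
        rw [hee]
      · rw [if_neg h3]
        have : n - t - 1 = 1 := by omega
        rw [this, Tsum_one, Nat.mul_zero]
    rw [Finset.sum_congr rfl hsum]
    -- arithmetic
    rcases Nat.lt_or_ge n 3 with h3 | h3
    · -- n = 2
      have hn2 : n = 2 := by omega
      subst hn2
      simp
    · have hr : n - 1 = (n - 2) + 1 := by omega
      rw [hr, Finset.sum_range_succ, if_neg (by omega)]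
      have hsum2 : ∀ t ∈ range (n-2), (if t + 3 ≤ n then t * 2^(n - 3 - t) else 0)
          = t * 2^((n-3) - t) := by
        intro t ht
        have := Finset.mem_range.1 ht
        rw [if_pos (by omega)]
      rw [Finset.sum_congr rfl hsum2]
      have hg := geom (n-3)
      have hr2 : (n - 3) + 1 = n - 2 := by omega
      rw [hr2] at hg
      omega
  · -- B nonempty
    set c := B.card with hc
    have hcpos : 1 ≤ c := Finset.card_pos.2 hne
    set b := B.min' hne with hbdef
    have hbB : b ∈ B := Finset.min'_mem B hne
    have hb1 : 1 ≤ b := Nat.pos_of_ne_zero (fun h => h0 (h ▸ hbB))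
    have hbr : b < n - 1 := Finset.mem_range.1 (hB hbB)
    have hbt : b ≠ n - 2 := fun h => htop (h ▸ hbB)
    have hb3 : b + 3 ≤ n := by omega
    have hbound : b + 2 * c ≤ n - 1 := sparse_bound hB hsp htop hne hn
    rw [if_neg (by intro h; exact hne.ne_empty (Finset.subset_empty.1 h))]
    have hBle : ∀ x ∈ B, b ≤ x := fun x hx => Finset.min'_le _ _ hx
    have hBtop : ∀ x ∈ B, x ≤ n - 3 := by
      intro x hx
      have h1 := Finset.mem_range.1 (hB hx)
      have h2 : x ≠ n - 2 := fun h => htop (h ▸ hx)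
      omega
    have hsum : ∀ t ∈ range (n-1),
        (∑ A' ∈ (range (n - 1 - t - 1)).powerset,
          if B ⊆ insert t (shUp (t+1) A')
            then Efun n (insert t (shUp (t+1) A')) else 0)
        = if t + 1 < b then t * 2^(n - 3 - 2*c - t)
          else if t = b then b * 2^(n - 1 - 2*c - b) else 0 := by
      intro t ht
      have htr := Finset.mem_range.1 ht
      rcases lt_trichotomy t b with hlt | heq | hgt
      · -- t < b
        have hcond : ∀ x ∈ B, x = t ∨ t + 1 ≤ x := by
          intro x hx; right; have := hBle x hx; omega
        rw [inner_eval n t B hcond]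
        have hter : B.erase t = B := Finset.erase_eq_of_notMem (fun h => by
          have := hBle t h; omega)
        rw [hter]
        rcases Nat.lt_or_ge (t+1) b with hlt2 | hge2
        · -- t + 1 < b : use IH
          rw [if_pos hlt2]
          have hshle : ∀ x ∈ B, t + 1 ≤ x := fun x hx => by have := hBle x hx; omega
          have hIH := IH (n - t - 1) (by omega) (shDn (t+1) B) (by omega)
            (by
              intro y hy
              rcases Finset.mem_image.1 hy with ⟨x, hx, rfl⟩
              have := hBtop x hx
              exact Finset.mem_range.2 (by omega))
            (sparse_shDn (fun x hx => by have := hshle x hx; omega) hsp)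
            (by
              intro hmem
              rcases Finset.mem_image.1 hmem with ⟨x, hx, hxe⟩
              have h1 := hshle x hx
              have h2 := hBle x hx
              omega)
            (by
              intro hmem
              rcases Finset.mem_image.1 hmem with ⟨x, hx, hxe⟩
              have h1 := hshle x hx
              have h2 := hBtop x hx
              omega)
          rw [hIH, card_shDn_of_ge (fun x hx => by have := hshle x hx; omega), ← hc]
          have hee : n - t - 1 - 2 - 2 * c = n - 3 - 2 * c - t := by omega
          rw [hee]
        · -- t + 1 = b : shifted set contains 0
          have htb : t + 1 = b := by omega
          have h0' : 0 ∈ shDn (t+1) B := Finset.mem_image.2 ⟨b, hbB, by omega⟩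
          rw [Tsum_zero_mem h0', Nat.mul_zero]
          rw [if_neg (by omega), if_neg (by omega)]
      · -- t = b
        have hcond : ∀ x ∈ B, x = t ∨ t + 1 ≤ x := by
          intro x hx
          have := hBle x hx
          omega
        rw [inner_eval n t B hcond]
        have herase : ∀ x ∈ B.erase t, t + 2 ≤ x := by
          intro x hx
          rcases Finset.mem_erase.1 hx with ⟨hxt, hxB⟩
          have h1 := hBle x hxB
          have h2 : x ≠ b + 1 := fun h => hsp b hbB (h ▸ hxB)
          omega
        have hIH := IH (n - t - 1) (by omega) (shDn (t+1) (B.erase t)) (by omega)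
          (by
            intro y hy
            rcases Finset.mem_image.1 hy with ⟨x, hx, rfl⟩
            have h1 := hBtop x (Finset.mem_erase.1 hx).2
            have h2 := herase x hx
            exact Finset.mem_range.2 (by omega))
          (sparse_shDn (fun x hx => by have := herase x hx; omega)
            (fun i hi hi1 => hsp i (Finset.mem_erase.1 hi).2 (Finset.mem_erase.1 hi1).2))
          (by
            intro hmem
            rcases Finset.mem_image.1 hmem with ⟨x, hx, hxe⟩
            have h1 := herase x hx
            omega)
          (by
            intro hmem
            rcases Finset.mem_image.1 hmem with ⟨x, hx, hxe⟩
            have h1 := herase x hx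
            have h2 := hBtop x (Finset.mem_erase.1 hx).2
            omega)
        rw [hIH, card_shDn_of_ge (fun x hx => by have := herase x hx; omega),
          Finset.card_erase_of_mem (heq ▸ hbB), ← hc]
        rw [if_neg (by omega), if_pos heq]
        have hee : n - t - 1 - 2 - 2 * (c - 1) = n - 1 - 2 * c - b := by omega
        rw [hee, heq]
      · -- t > b : empty
        rw [if_neg (by omega), if_neg (by omega)]
        apply Finset.sum_eq_zero
        intro A' _
        rw [if_neg]
        intro hsub
        rcases (subset_insert_shUp.1 hsub).1 b hbB with h | h <;> omega
    rw [Finset.sum_congr rfl hsum, Nat.zero_add]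
    -- final arithmetic
    have hzero : ∀ t ∈ range (n-1), t ∉ range (b+1) →
        (if t + 1 < b then t * 2^(n - 3 - 2*c - t)
          else if t = b then b * 2^(n - 1 - 2*c - b) else 0) = 0 := by
      intro t _ ht
      have : b + 1 ≤ t := by
        by_contra h
        exact ht (Finset.mem_range.2 (by omega))
      rw [if_neg (by omega), if_neg (by omega)]
    rw [← Finset.sum_subset (Finset.range_subset_range.2 (by omega : b + 1 ≤ n - 1)) hzero]
    rw [Finset.sum_range_succ, if_neg (by omega), if_pos rfl]
    have hrb : b = (b - 1) + 1 := by omega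
    rw [hrb, Finset.sum_range_succ, if_neg (by omega), if_neg (by omega), Nat.add_zero, ← hrb]
    have hterm : ∀ t ∈ range (b-1),
        (if t + 1 < b then t * 2^(n - 3 - 2*c - t)
          else if t = b then b * 2^(n - 1 - 2*c - b) else 0)
        = t * 2^(n - 3 - 2*c - t) := by
      intro t ht
      have := Finset.mem_range.1 ht
      rw [if_pos (by omega)]
    rw [Finset.sum_congr rfl hterm]
    rcases Nat.eq_or_lt_of_le hb1 with hb1' | hb2
    · -- b = 1 : degenerate, range (b-1) empty
      rw [← hb1']
      simp only [Nat.sub_self, Finset.range_zero, Finset.sum_empty, Nat.zero_add]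
      have : n - 1 - 2*c - 1 = n - 2 - 2*c := by omega
      rw [this, Nat.one_mul]
    · -- b ≥ 2 : use Ifun
      have h2c : 2 * c + 2 ≤ n - 1 := by omega
      set E := n - 3 - 2*c with hE
      have hEe : n - 3 - 2*c = E := rfl
      have hI := Ifun E b hb1 (by omega)
      have he1 : n - 1 - 2*c - b = E + 2 - b := by omega
      rw [he1]
      have he2 : n - 2 - 2*c = E + 1 := by omega
      rw [he2]
      exact hI

def Asc' {n : ℕ} (π : Equiv.Perm (Fin n)) (i : ℕ) : Prop :=
  ∃ h : i + 1 < n, π ⟨i, Nat.lt_of_succ_lt h⟩ < π ⟨i + 1, h⟩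

def Desc' {n : ℕ} (π : Equiv.Perm (Fin n)) (i : ℕ) : Prop :=
  ∃ h : i + 1 < n, π ⟨i + 1, h⟩ < π ⟨i, Nat.lt_of_succ_lt h⟩

noncomputable def ascSet {n : ℕ} (π : Equiv.Perm (Fin n)) : Finset ℕ :=
  (range (n-1)).filter (fun i => Asc' π i)

lemma asc_lt {n : ℕ} {π : Equiv.Perm (Fin n)} {i : ℕ} (h : Asc' π i) : i + 1 < n := h.1

lemma desc_lt {n : ℕ} {π : Equiv.Perm (Fin n)} {i : ℕ} (h : Desc' π i) : i + 1 < n := h.1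

lemma not_asc_iff_desc {n : ℕ} (π : Equiv.Perm (Fin n)) {i : ℕ} (h : i + 1 < n) :
    ¬ Asc' π i ↔ Desc' π i := by
  have hne : π ⟨i, Nat.lt_of_succ_lt h⟩ ≠ π ⟨i + 1, h⟩ := by
    intro heq
    have := π.injective heq
    simp only [Fin.mk.injEq] at this
    omega
  constructor
  · intro hna
    refine ⟨h, ?_⟩
    rcases lt_or_gt_of_ne hne with hlt | hgt
    · exact absurd ⟨h, hlt⟩ hna
    · exact hgt
  · rintro ⟨h', hd⟩ ⟨h'', ha⟩
    exact absurd (ha.trans hd) (lt_irrefl _)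

lemma mem_ascSet {n : ℕ} {π : Equiv.Perm (Fin n)} {i : ℕ} :
    i ∈ ascSet π ↔ Asc' π i := by
  rw [ascSet, Finset.mem_filter, Finset.mem_range]
  constructor
  · exact fun h => h.2
  · intro h
    exact ⟨by have := asc_lt h; omega, h⟩

lemma ascSet_subset {n : ℕ} (π : Equiv.Perm (Fin n)) : ascSet π ⊆ range (n-1) :=
  Finset.filter_subset _ _

lemma dd_eq' {n : ℕ} (hn : 2 ≤ n) (π : Equiv.Perm (Fin n)) (hsp : SparseF (ascSet π))
    (h0 : 0 ∉ ascSet π) (htop : n - 2 ∉ ascSet π) :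
    ((Finset.range n).filter (fun i => Desc' π i ∧ Desc' π (i + 1))).card
      = n - 2 - 2 * (ascSet π).card := by
  set A := ascSet π with hA
  have hAtop : ∀ a ∈ A, a ≤ n - 3 := by
    intro a ha
    have h1 : a < n - 1 := Finset.mem_range.1 (ascSet_subset π ha)
    have h2 : a ≠ n - 2 := fun h => htop (h ▸ ha)
    omega
  have hAlo : ∀ a ∈ A, 1 ≤ a := by
    intro a ha
    rcases Nat.eq_zero_or_pos a with rfl | h
    · exact absurd ha h0
    · exact h
  have hset : (Finset.range n).filter (fun i => Desc' π i ∧ Desc' π (i + 1))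
      = range (n-2) \ (A ∪ shDn 1 A) := by
    ext i
    simp only [Finset.mem_filter, Finset.mem_range, Finset.mem_sdiff, Finset.mem_union]
    constructor
    · rintro ⟨hi, hd1, hd2⟩
      have h2 := desc_lt hd2
      refine ⟨by omega, ?_⟩
      rintro (hmem | hmem)
      · exact ((not_asc_iff_desc π (desc_lt hd1)).2 hd1) (mem_ascSet.1 hmem)
      · rcases Finset.mem_image.1 hmem with ⟨a, ha, hae⟩
        have := hAlo a ha
        have hai : a = i + 1 := by omega
        exact ((not_asc_iff_desc π h2).2 hd2) (mem_ascSet.1 (hai ▸ ha))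
    · rintro ⟨hi, hmem⟩
      push_neg at hmem
      have h1 : i + 1 < n := by omega
      have h2 : i + 1 + 1 < n := by omega
      refine ⟨by omega, ?_, ?_⟩
      · rw [← not_asc_iff_desc π h1]
        intro ha
        exact hmem.1 (mem_ascSet.2 ha)
      · rw [← not_asc_iff_desc π h2]
        intro ha
        exact hmem.2 (Finset.mem_image.2 ⟨i + 1, mem_ascSet.2 ha, by omega⟩)
  rw [hset]
  have hsub : A ∪ shDn 1 A ⊆ range (n-2) := by
    intro x hx
    rcases Finset.mem_union.1 hx with hx | hx
    · have h1 := hAtop x hx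
      have h2 := hAlo x hx
      exact Finset.mem_range.2 (by omega)
    · rcases Finset.mem_image.1 hx with ⟨a, ha, hae⟩
      have hae' : a - 1 = x := hae
      have h1 := hAtop a ha
      have h2 := hAlo a ha
      exact Finset.mem_range.2 (by omega)
  rw [Finset.card_sdiff_of_subset hsub, Finset.card_range]
  have hdisj : Disjoint A (shDn 1 A) := by
    rw [Finset.disjoint_left]
    intro x hx hx'
    rcases Finset.mem_image.1 hx' with ⟨a, ha, hae⟩
    have h1 := hAlo a ha
    have hax : a = x + 1 := by omega
    exact hsp x hx (hax ▸ ha)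
  rw [Finset.card_union_of_disjoint hdisj, card_shDn_of_ge hAlo]
  omega

noncomputable def Nfun (n : ℕ) (A : Finset ℕ) : ℕ :=
  (Finset.univ.filter (fun π : Equiv.Perm (Fin n) => ascSet π ⊆ A)).card

lemma strictAnti_aux {N : ℕ} {β : Type*} [Preorder β] (f : Fin N → β)
    (h : ∀ p (hp : p + 1 < N), f ⟨p+1, hp⟩ < f ⟨p, Nat.lt_of_succ_lt hp⟩) : StrictAnti f := by
  have key : ∀ d (a : Fin N) (b : Fin N), (b : ℕ) = (a : ℕ) + d + 1 → f b < f a := by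
    intro d
    induction d with
    | zero =>
      intro a b hb
      have hb' : (a : ℕ) + 1 < N := by omega
      have hbeq : b = ⟨(a:ℕ)+1, hb'⟩ := by apply Fin.ext; simp [hb]
      have := h (a:ℕ) hb'
      rw [hbeq]
      exact this
    | succ d ih =>
      intro a b hb
      have ha1 : (a:ℕ) + 1 < N := by have := b.2; omega
      have h1 : f b < f ⟨(a:ℕ)+1, ha1⟩ := ih ⟨(a:ℕ)+1, ha1⟩ b (by simp; omega)
      exact h1.trans (h _ _)
  intro a b hab
  exact key ((b:ℕ) - (a:ℕ) - 1) a b (by omega)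

lemma perm_strictMono_eq {n : ℕ} (e : Equiv.Perm (Fin n)) (he : StrictMono ⇑e) :
    ∀ i, e i = i := by
  have hsymm : StrictMono ⇑e.symm := by
    intro a b hab
    rcases lt_trichotomy (e.symm a) (e.symm b) with h | h | h
    · exact h
    · exfalso
      have : a = b := by
        have := congrArg e h
        simpa using this
      exact absurd this (ne_of_lt hab)
    · exfalso
      have := he h
      simp at this
      exact absurd (hab.trans this) (lt_irrefl _)
  have key : ∀ (f : Equiv.Perm (Fin n)), StrictMono ⇑f → ∀ p (hp : p < n), p ≤ (f ⟨p, hp⟩ : ℕ) := by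
    intro f hf p
    induction p with
    | zero => intro hp; exact Nat.zero_le _
    | succ p ih =>
      intro hp
      have hp' : p < n := by omega
      have h1 := ih hp'
      have h2 : f ⟨p, hp'⟩ < f ⟨p+1, hp⟩ := hf (by simp [Fin.mk_lt_mk])
      have h3 : (f ⟨p, hp'⟩ : ℕ) < (f ⟨p+1, hp⟩ : ℕ) := h2
      omega
  intro i
  have h1 : (i : ℕ) ≤ (e i : ℕ) := by
    have := key e he (i : ℕ) i.2
    simpa using this
  have h2 : ((e i) : ℕ) ≤ (e.symm (e i) : ℕ) := by
    have := key e.symm hsymm ((e i) : ℕ) (e i).2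
    simpa using this
  rw [Equiv.symm_apply_apply] at h2
  exact Fin.ext (le_antisymm (by omega) h1)

lemma N_empty (n : ℕ) : Nfun n ∅ = 1 := by
  rw [Nfun]
  rw [Finset.card_eq_one]
  refine ⟨Fin.revPerm, ?_⟩
  apply Finset.eq_singleton_iff_unique_mem.2
  constructor
  · apply Finset.mem_filter.2
    refine ⟨Finset.mem_univ _, ?_⟩
    intro i hi
    rcases mem_ascSet.1 hi with ⟨h, hlt⟩
    exfalso
    simp only [Fin.revPerm_apply] at hlt
    have h2 := Fin.rev_lt_rev.1 hlt
    have h3 : i + 1 < i := h2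
    omega
  · intro π hπ
    rcases Finset.mem_filter.1 hπ with ⟨_, hsub⟩
    have hdesc : ∀ p (hp : p + 1 < n),
        π ⟨p+1, hp⟩ < π ⟨p, Nat.lt_of_succ_lt hp⟩ := by
      intro p hp
      have hna : ¬ Asc' π p := by
        intro ha
        exact absurd (hsub (mem_ascSet.2 ha)) (Finset.notMem_empty _)
      rcases (not_asc_iff_desc π hp).1 hna with ⟨h', hd⟩
      exact hd
    have hanti : StrictAnti ⇑π := strictAnti_aux _ hdesc
    have hmono : StrictMono ⇑(Fin.revPerm.trans π) := by
      intro a b hab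
      simp only [Equiv.trans_apply, Fin.revPerm_apply]
      exact hanti (Fin.rev_lt_rev.2 hab)
    have := perm_strictMono_eq _ hmono
    apply Equiv.ext
    intro j
    have hj := this (Fin.rev j)
    simp only [Equiv.trans_apply, Fin.revPerm_apply, Fin.rev_rev] at hj
    rw [hj]
    rfl

section BuildPerm

variable {k m : ℕ}

lemma card_compl_of_card {s : Finset (Fin (k+m))} (hs : s.card = k) : sᶜ.card = m := by
  rw [Finset.card_compl, hs, Fintype.card_fin]
  omega

noncomputable def buildPerm (s : Finset (Fin (k+m))) (hs : s.card = k)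
    (σ : Equiv.Perm (Fin m)) : Equiv.Perm (Fin (k+m)) :=
  finSumFinEquiv.symm.trans
    ((Equiv.sumCongr
        ((Fin.revPerm).trans (s.orderIsoOfFin hs).toEquiv)
        (σ.trans (((sᶜ).orderIsoOfFin (card_compl_of_card hs)).toEquiv.trans
          (Equiv.subtypeEquivRight (fun x => Finset.mem_compl))))).trans
      (Equiv.sumCompl (· ∈ s)))

lemma buildPerm_castAdd (s : Finset (Fin (k+m))) (hs : s.card = k)
    (σ : Equiv.Perm (Fin m)) (i : Fin k) :
    buildPerm s hs σ (Fin.castAdd m i) = ↑(s.orderIsoOfFin hs i.rev) := by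
  simp [buildPerm, Equiv.trans_apply, finSumFinEquiv_symm_apply_castAdd,
    Equiv.sumCongr_apply, Sum.map_inl, Equiv.sumCompl_apply_inl]

lemma buildPerm_natAdd (s : Finset (Fin (k+m))) (hs : s.card = k)
    (σ : Equiv.Perm (Fin m)) (j : Fin m) :
    buildPerm s hs σ (Fin.natAdd k j)
      = ↑((sᶜ).orderIsoOfFin (card_compl_of_card hs) (σ j)) := by
  simp [buildPerm, Equiv.trans_apply, finSumFinEquiv_symm_apply_natAdd,
    Equiv.sumCongr_apply, Sum.map_inr, Equiv.sumCompl_apply_inr,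
    Equiv.subtypeEquivRight]
  rfl

lemma ascSet_buildPerm {s : Finset (Fin (k+m))} {hs : s.card = k}
    {σ : Equiv.Perm (Fin m)} (hk : 1 ≤ k) {A' : Finset ℕ} (hσ : ascSet σ ⊆ A') :
    ascSet (buildPerm s hs σ) ⊆ insert (k-1) (shUp k A') := by
  intro p hp
  rcases mem_ascSet.1 hp with ⟨h, hlt⟩
  rcases Nat.lt_trichotomy (p+1) k with hpk | hpk | hpk
  · -- impossible: descending block
    exfalso
    have e1 : (⟨p, Nat.lt_of_succ_lt h⟩ : Fin (k+m)) = Fin.castAdd m ⟨p, by omega⟩ :=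
      Fin.ext rfl
    have e2 : (⟨p+1, h⟩ : Fin (k+m)) = Fin.castAdd m ⟨p+1, hpk⟩ := Fin.ext rfl
    rw [e1, e2, buildPerm_castAdd, buildPerm_castAdd] at hlt
    have h3 := (s.orderIsoOfFin hs).lt_iff_lt.1 (Subtype.coe_lt_coe.1 hlt)
    have h4 := Fin.rev_lt_rev.1 h3
    have h5 : p + 1 < p := h4
    omega
  · exact Finset.mem_insert.2 (Or.inl (by omega))
  · -- right block: ascent of σ
    have hj : p - k < m := by omega
    have hj1 : p + 1 - k < m := by omega
    have e1 : (⟨p, Nat.lt_of_succ_lt h⟩ : Fin (k+m)) = Fin.natAdd k ⟨p - k, hj⟩ :=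
      Fin.ext (by simp; omega)
    have e2 : (⟨p+1, h⟩ : Fin (k+m)) = Fin.natAdd k ⟨p + 1 - k, hj1⟩ :=
      Fin.ext (by simp; omega)
    rw [e1, e2, buildPerm_natAdd, buildPerm_natAdd] at hlt
    have h3 := ((sᶜ).orderIsoOfFin (card_compl_of_card hs)).lt_iff_lt.1
      (Subtype.coe_lt_coe.1 hlt)
    have hasc : Asc' σ (p - k) := by
      refine ⟨by omega, ?_⟩
      have e3 : (⟨p - k, hj⟩ : Fin m) = ⟨p - k, by omega⟩ := rfl
      have e4 : (⟨p + 1 - k, hj1⟩ : Fin m) = ⟨(p - k) + 1, by omega⟩ := Fin.ext (by simp; omega)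
      rw [e3, e4] at h3
      exact h3
    have := hσ (mem_ascSet.2 hasc)
    exact Finset.mem_insert.2 (Or.inr (mem_shUp.2 ⟨p - k, this, by omega⟩))

lemma buildPerm_image (s : Finset (Fin (k+m))) (hs : s.card = k) (σ : Equiv.Perm (Fin m)) :
    Finset.univ.image (fun i : Fin k => buildPerm s hs σ (Fin.castAdd m i)) = s := by
  apply Finset.eq_of_subset_of_card_le
  · intro x hx
    rcases Finset.mem_image.1 hx with ⟨i, _, rfl⟩
    rw [buildPerm_castAdd]
    exact (s.orderIsoOfFin hs i.rev).2
  · rw [Finset.card_image_of_injective _ (fun a b hab => by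
      rw [buildPerm_castAdd, buildPerm_castAdd] at hab
      have := (s.orderIsoOfFin hs).injective (Subtype.coe_injective hab)
      exact Fin.rev_injective this)]
    rw [hs, Finset.card_univ, Fintype.card_fin]

end BuildPerm

lemma N_rec (k m : ℕ) (hk : 1 ≤ k) (A' : Finset ℕ) :
    Nfun (k + m) (insert (k-1) (shUp k A')) = (k + m).choose k * Nfun m A' := by
  classical
  set S := insert (k-1) (shUp k A') with hS
  have hN1 : Nfun (k+m) S = Fintype.card {π : Equiv.Perm (Fin (k+m)) // ascSet π ⊆ S} := by
    rw [Nfun, Fintype.card_subtype]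
  have hN2 : Nfun m A' = Fintype.card {σ : Equiv.Perm (Fin m) // ascSet σ ⊆ A'} := by
    rw [Nfun, Fintype.card_subtype]
  rw [hN1, hN2]
  have hcard : Fintype.card {s : Finset (Fin (k+m)) // s.card = k} = (k+m).choose k := by
    rw [Fintype.card_finset_len, Fintype.card_fin]
  rw [← hcard, ← Fintype.card_prod]
  apply Fintype.card_congr
  apply Equiv.symm
  apply Equiv.ofBijective
    (f := fun x : ({s : Finset (Fin (k+m)) // s.card = k} ×
        {σ : Equiv.Perm (Fin m) // ascSet σ ⊆ A'}) =>
      (⟨buildPerm x.1.1 x.1.2 x.2.1, ascSet_buildPerm hk x.2.2⟩ :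
        {π : Equiv.Perm (Fin (k+m)) // ascSet π ⊆ S}))
  constructor
  · -- injective
    rintro ⟨⟨s, hs⟩, ⟨σ, hσ⟩⟩ ⟨⟨s', hs'⟩, ⟨σ', hσ'⟩⟩ heq
    have hperm : buildPerm s hs σ = buildPerm s' hs' σ' := congrArg Subtype.val heq
    have hseq : s = s' := by
      rw [← buildPerm_image s hs σ, ← buildPerm_image s' hs' σ', hperm]
    subst hseq
    have hσeq : σ = σ' := by
      apply Equiv.ext
      intro j
      have h1 : buildPerm s hs σ (Fin.natAdd k j) = buildPerm s hs' σ' (Fin.natAdd k j) := by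
        rw [hperm]
      rw [buildPerm_natAdd, buildPerm_natAdd] at h1
      exact ((sᶜ).orderIsoOfFin (card_compl_of_card hs)).injective
        (Subtype.coe_injective h1)
    subst hσeq
    rfl
  · -- surjective
    rintro ⟨π, hπ⟩
    set s : Finset (Fin (k+m)) := Finset.univ.image (fun i : Fin k => π (Fin.castAdd m i))
      with hsdef
    have hcastinj : Function.Injective (fun i : Fin k => π (Fin.castAdd m i)) := by
      intro a b hab
      have := π.injective hab
      have h2 := congrArg Fin.val this
      exact Fin.ext (by simpa using h2)
    have hs : s.card = k := by
      rw [hsdef, Finset.card_image_of_injective _ hcastinj, Finset.card_univ,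
        Fintype.card_fin]
    -- left block is decreasing
    have hdesc : ∀ p (hp : p + 1 < k),
        (fun i : Fin k => π (Fin.castAdd m i)) ⟨p+1, hp⟩
          < (fun i : Fin k => π (Fin.castAdd m i)) ⟨p, Nat.lt_of_succ_lt hp⟩ := by
      intro p hp
      have hpm : p + 1 < k + m := by omega
      have hnotS : p ∉ S := by
        rw [hS]
        intro hmem
        rcases Finset.mem_insert.1 hmem with h | h
        · omega
        · rcases mem_shUp.1 h with ⟨a, _, h⟩; omega
      have hna : ¬ Asc' π p := fun ha => hnotS (hπ (mem_ascSet.2 ha))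
      rcases (not_asc_iff_desc π hpm).1 hna with ⟨h', hd⟩
      have e1 : (Fin.castAdd m ⟨p+1, hp⟩) = (⟨p+1, h'⟩ : Fin (k+m)) := Fin.ext rfl
      have e2 : (Fin.castAdd m ⟨p, Nat.lt_of_succ_lt hp⟩)
          = (⟨p, Nat.lt_of_succ_lt h'⟩ : Fin (k+m)) := Fin.ext rfl
      simp only []
      rw [e1, e2]
      exact hd
    have hanti : StrictAnti (fun i : Fin k => π (Fin.castAdd m i)) :=
      strictAnti_aux _ hdesc
    have hmono : StrictMono (fun i : Fin k => π (Fin.castAdd m i.rev)) := by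
      intro a b hab
      exact hanti (Fin.rev_lt_rev.2 hab)
    have hmem : ∀ i : Fin k, π (Fin.castAdd m i.rev) ∈ s := by
      intro i
      exact Finset.mem_image.2 ⟨i.rev, Finset.mem_univ _, rfl⟩
    have huniq := Finset.orderEmbOfFin_unique hs hmem hmono
    have hL : ∀ i : Fin k, π (Fin.castAdd m i) = s.orderEmbOfFin hs i.rev := by
      intro i
      have := congrFun huniq i.rev
      simpa [Fin.rev_rev] using this
    -- right block
    have hRmem : ∀ j : Fin m, π (Fin.natAdd k j) ∈ sᶜ := by
      intro j
      rw [Finset.mem_compl]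
      intro hmem
      rcases Finset.mem_image.1 hmem with ⟨i, _, hi⟩
      have := π.injective hi
      have h2 := congrArg Fin.val this
      simp at h2
      omega
    set g2 : Fin m → Fin m := fun j =>
      ((sᶜ).orderIsoOfFin (card_compl_of_card hs)).symm ⟨π (Fin.natAdd k j), hRmem j⟩
      with hg2def
    have hg2inj : Function.Injective g2 := by
      intro a b hab
      rw [hg2def] at hab
      have h1 := ((sᶜ).orderIsoOfFin (card_compl_of_card hs)).symm.injective hab
      have h2 : π (Fin.natAdd k a) = π (Fin.natAdd k b) := congrArg Subtype.val h1
      have h3 := congrArg Fin.val (π.injective h2)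
      simp at h3
      exact Fin.ext h3
    set σ : Equiv.Perm (Fin m) :=
      Equiv.ofBijective g2 (Finite.injective_iff_bijective.1 hg2inj) with hσdef
    have hR : ∀ j : Fin m,
        (↑((sᶜ).orderIsoOfFin (card_compl_of_card hs) (σ j)) : Fin (k+m))
          = π (Fin.natAdd k j) := by
      intro j
      have hσj : σ j = g2 j := rfl
      rw [hσj, hg2def]
      simp
    have hσasc : ascSet σ ⊆ A' := by
      intro j hj
      rcases mem_ascSet.1 hj with ⟨hjm, hlt⟩
      have h1 : (↑((sᶜ).orderIsoOfFin (card_compl_of_card hs) (σ ⟨j, Nat.lt_of_succ_lt hjm⟩)) : Fin (k+m))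
          < ↑((sᶜ).orderIsoOfFin (card_compl_of_card hs) (σ ⟨j+1, hjm⟩)) := by
        exact Subtype.coe_lt_coe.2
          (((sᶜ).orderIsoOfFin (card_compl_of_card hs)).lt_iff_lt.2 hlt)
      rw [hR, hR] at h1
      have hkj : k + j + 1 < k + m := by omega
      have hasc : Asc' π (k + j) := by
        refine ⟨hkj, ?_⟩
        have e1 : (⟨k+j, Nat.lt_of_succ_lt hkj⟩ : Fin (k+m))
            = Fin.natAdd k ⟨j, Nat.lt_of_succ_lt hjm⟩ := Fin.ext rfl
        have e2 : (⟨k+j+1, hkj⟩ : Fin (k+m)) = Fin.natAdd k ⟨j+1, hjm⟩ :=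
          Fin.ext (by simp; omega)
        rw [e1, e2]
        exact h1
      have hmem := hπ (mem_ascSet.2 hasc)
      rw [hS] at hmem
      rcases Finset.mem_insert.1 hmem with h | h
      · omega
      · rcases mem_shUp.1 h with ⟨a, ha, hae⟩
        have : a = j := by omega
        exact this ▸ ha
    refine ⟨⟨⟨s, hs⟩, ⟨σ, hσasc⟩⟩, ?_⟩
    apply Subtype.ext
    apply Equiv.ext
    intro x
    have hx := Fin.addCases (motive := fun x : Fin (k+m) => buildPerm s hs σ x = π x)
      (fun i => by
        show buildPerm s hs σ (Fin.castAdd m i) = π (Fin.castAdd m i)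
        rw [buildPerm_castAdd, hL, Finset.coe_orderIsoOfFin_apply])
      (fun j => by
        show buildPerm s hs σ (Fin.natAdd k j) = π (Fin.natAdd k j)
        rw [buildPerm_natAdd, hR])
      x
    exact hx

lemma Asum (n : ℕ) : ∑ j ∈ range (n+1), n.choose j * numDerangements (n - j) = Nat.factorial n := by
  classical
  have hfib : ∀ F : Finset (Fin n),
      (Finset.univ.filter (fun σ : Equiv.Perm (Fin n) =>
        Finset.univ.filter (fun x => σ x = x) = F)).card = numDerangements (n - F.card) := by
    intro F
    have h1 : (Finset.univ.filter (fun σ : Equiv.Perm (Fin n) =>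
        Finset.univ.filter (fun x => σ x = x) = F)).card
        = Fintype.card {σ : Equiv.Perm (Fin n) // ∀ a, ¬ (a ∉ F) ↔ σ a = a} := by
      rw [Fintype.card_subtype]
      congr 1
      apply Finset.filter_congr
      intro σ _
      rw [Finset.ext_iff]
      simp only [Finset.mem_filter, Finset.mem_univ, true_and, not_not]
      constructor <;> intro h a <;> have h' := h a <;> tauto
    rw [h1]
    have E2 : {σ : Equiv.Perm (Fin n) // ∀ a, ¬ (a ∉ F) ↔ σ a = a}
        ≃ derangements {a : Fin n // a ∉ F} := by
      refine Equiv.trans ?_ (derangements.subtypeEquiv (fun a : Fin n => a ∉ F)).symm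
      apply Equiv.subtypeEquivRight
      intro f
      constructor
      · intro h a
        rw [h a]
        rfl
      · intro h a
        rw [h a]
        rfl
    rw [Fintype.card_congr E2, card_derangements_eq_numDerangements]
    congr 1
    rw [Fintype.card_subtype_compl, Fintype.card_fin]
    congr 1
    exact Fintype.card_coe F
  have hmain : Nat.factorial n = ∑ F ∈ (Finset.univ : Finset (Fin n)).powerset,
      numDerangements (n - F.card) := by
    have hpc : Nat.factorial n = (Finset.univ : Finset (Equiv.Perm (Fin n))).card := by
      rw [Finset.card_univ, Fintype.card_perm, Fintype.card_fin]
    rw [hpc, Finset.card_eq_sum_card_fiberwise (f := fun σ : Equiv.Perm (Fin n) =>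
      Finset.univ.filter (fun x => σ x = x))
      (t := (Finset.univ : Finset (Fin n)).powerset)
      (fun σ _ => Finset.mem_powerset.2 (Finset.filter_subset _ _))]
    apply Finset.sum_congr rfl
    intro F _
    exact hfib F
  rw [hmain, Finset.sum_powerset_apply_card (f := fun j => numDerangements (n - j))]
  rw [Finset.card_univ, Fintype.card_fin]
  apply Finset.sum_congr rfl
  intro j _
  rw [smul_eq_mul]

lemma Bsum (n : ℕ) (hn : 1 ≤ n) :
    ∑ i ∈ range n, (i+1) * n.choose (i+1) * numDerangements (n - (i+1)) = Nat.factorial n := by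
  obtain ⟨n', rfl⟩ : ∃ n', n = n' + 1 := ⟨n - 1, by omega⟩
  have hterm : ∀ i ∈ range (n'+1),
      (i+1) * (n'+1).choose (i+1) * numDerangements (n' + 1 - (i+1))
      = (n'+1) * (n'.choose i * numDerangements (n' - i)) := by
    intro i _
    have h1 : (i+1) * (n'+1).choose (i+1) = (n'+1) * n'.choose i := by
      have h := Nat.add_one_mul_choose_eq n' i
      rw [h]
      exact mul_comm _ _
    rw [show n' + 1 - (i+1) = n' - i from by omega]
    calc (i+1) * (n'+1).choose (i+1) * numDerangements (n' - i)
        = ((n'+1) * n'.choose i) * numDerangements (n' - i) := by rw [h1]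
      _ = (n'+1) * (n'.choose i * numDerangements (n' - i)) := by ring
  rw [Finset.sum_congr rfl hterm, ← Finset.mul_sum, Asum n', Nat.factorial_succ]

lemma DrecM2 (n : ℕ) (hn : 2 ≤ n) :
    (n-1) + ∑ t ∈ range (n-1), t * n.choose (t+1) * numDerangements (n-t-1)
      = numDerangements n := by
  have hA := Asum n
  have hA' : (∑ i ∈ range n, n.choose (i+1) * numDerangements (n - (i+1)))
      + numDerangements n = Nat.factorial n := by
    rw [Finset.sum_range_succ'] at hA
    simpa using hA
  have hB := Bsum n (by omega)
  -- X' := ∑_{i<n} i * C(n,i+1) * D(n-i-1)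
  have hsplit : ∀ i ∈ range n,
      i * n.choose (i+1) * numDerangements (n-(i+1))
        + n.choose (i+1) * numDerangements (n - (i+1))
      = (i+1) * n.choose (i+1) * numDerangements (n-(i+1)) := by
    intro i _
    ring
  have hXB : (∑ i ∈ range n, i * n.choose (i+1) * numDerangements (n-(i+1)))
      + (∑ i ∈ range n, n.choose (i+1) * numDerangements (n - (i+1)))
      = ∑ i ∈ range n, (i+1) * n.choose (i+1) * numDerangements (n-(i+1)) := by
    rw [← Finset.sum_add_distrib]
    exact Finset.sum_congr rfl hsplit
  have hX : (∑ i ∈ range n, i * n.choose (i+1) * numDerangements (n-(i+1)))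
      = numDerangements n := by omega
  -- peel the last term i = n-1
  have hr : n = (n-1) + 1 := by omega
  rw [hr, Finset.sum_range_succ] at hX
  rw [← hr] at hX
  rw [Nat.choose_self, Nat.sub_self, numDerangements_zero, mul_one, mul_one] at hX
  have hre : ∀ t ∈ range (n-1),
      t * n.choose (t+1) * numDerangements (n-(t+1))
      = t * n.choose (t+1) * numDerangements (n-t-1) := by
    intro t _
    rw [show n - (t+1) = n - t - 1 by omega]
  rw [Finset.sum_congr rfl hre] at hX
  omega

lemma N_rec' {n t : ℕ} (h : t + 2 ≤ n) (A' : Finset ℕ) :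
    Nfun n (insert t (shUp (t+1) A')) = n.choose (t+1) * Nfun (n-t-1) A' := by
  have hrec := N_rec (t+1) (n-t-1) (by omega) A'
  rw [show (t+1) + (n-t-1) = n from by omega] at hrec
  rw [show t + 1 - 1 = t from rfl] at hrec
  exact hrec

lemma M2 : ∀ n, 1 ≤ n → (∑ A ∈ (range (n-1)).powerset, Efun n A * Nfun n A)
    = numDerangements n := by
  intro n
  induction n using Nat.strong_induction_on with
  | _ n IH =>
  intro hn
  rcases eq_or_lt_of_le hn with h1 | h2
  · rw [← h1]
    rw [show (1:ℕ) - 1 = 0 from rfl, Finset.range_zero, Finset.powerset_empty,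
      Finset.sum_singleton, Efun_empty]
    simp
  · rw [sum_powerset_peel]
    rw [Efun_empty, N_empty, mul_one]
    have hinner : ∀ t ∈ range (n-1),
        (∑ A' ∈ (range (n-1-t-1)).powerset,
          Efun n (insert t (shUp (t+1) A')) * Nfun n (insert t (shUp (t+1) A')))
        = t * n.choose (t+1) * numDerangements (n-t-1) := by
      intro t ht
      have htr := Finset.mem_range.1 ht
      have hterm : ∀ A' ∈ (range (n-1-t-1)).powerset,
          Efun n (insert t (shUp (t+1) A')) * Nfun n (insert t (shUp (t+1) A'))
          = (t * n.choose (t+1)) * (Efun (n-t-1) A' * Nfun (n-t-1) A') := by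
        intro A' _
        rw [Efun_insert_shUp, N_rec' (by omega)]
        ring
      rw [Finset.sum_congr rfl hterm, ← Finset.mul_sum]
      rw [show n - 1 - t - 1 = (n-t-1) - 1 from by omega]
      rw [IH (n-t-1) (by omega) (by omega)]
    rw [Finset.sum_congr rfl hinner]
    exact DrecM2 n (by omega)

/-- π has an ascent at position i (0-indexed): π_i < π_{i+1}. -/
def Asc {n : ℕ} (π : Equiv.Perm (Fin n)) (i : ℕ) : Prop :=
  ∃ h : i + 1 < n, π ⟨i, Nat.lt_of_succ_lt h⟩ < π ⟨i + 1, h⟩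

/-- π has a descent at position i (0-indexed): π_i > π_{i+1}. -/
def Desc {n : ℕ} (π : Equiv.Perm (Fin n)) (i : ℕ) : Prop :=
  ∃ h : i + 1 < n, π ⟨i + 1, h⟩ < π ⟨i, Nat.lt_of_succ_lt h⟩

/-- The number of double descents of π: positions i with π_i > π_{i+1} > π_{i+2}. -/
noncomputable def dd {n : ℕ} (π : Equiv.Perm (Fin n)) : ℕ :=
  ((Finset.range n).filter (fun i => Desc π i ∧ Desc π (i + 1))).card

/-- π has no double ascents: no i with π_i < π_{i+1} < π_{i+2}. -/
def NoDoubleAsc {n : ℕ} (π : Equiv.Perm (Fin n)) : Prop :=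
  ∀ i : ℕ, ¬ (Asc π i ∧ Asc π (i + 1))

/-- α_n(b,b) = Σ 2^{dd(π)} over permutations of [n] with no double ascents whose
descent word starts and ends with a descent. -/
noncomputable def alphaBB (n : ℕ) : ℕ :=
  ∑ π ∈ Finset.univ.filter
      (fun π : Equiv.Perm (Fin n) => NoDoubleAsc π ∧ Desc π 0 ∧ Desc π (n - 2)),
    2 ^ dd π

lemma asc_eq {n : ℕ} (π : Equiv.Perm (Fin n)) (i : ℕ) : Asc π i ↔ Asc' π i := Iff.rfl

lemma desc_eq {n : ℕ} (π : Equiv.Perm (Fin n)) (i : ℕ) : Desc π i ↔ Desc' π i := Iff.rfl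

lemma dd_eq {n : ℕ} (π : Equiv.Perm (Fin n)) :
    dd π = ((Finset.range n).filter (fun i => Desc' π i ∧ Desc' π (i + 1))).card := rfl

lemma M3 {n : ℕ} (hn : 2 ≤ n) (π : Equiv.Perm (Fin n)) :
    Tsum n (ascSet π) = if NoDoubleAsc π ∧ Desc π 0 ∧ Desc π (n-2) then 2 ^ dd π else 0 := by
  by_cases hcls : NoDoubleAsc π ∧ Desc π 0 ∧ Desc π (n-2)
  · rw [if_pos hcls]
    obtain ⟨hnda, hd0, hdt⟩ := hcls
    have hsp : SparseF (ascSet π) := by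
      intro i hi hi1
      exact hnda i ⟨(asc_eq π i).2 (mem_ascSet.1 hi), (asc_eq π (i+1)).2 (mem_ascSet.1 hi1)⟩
    have h0 : 0 ∉ ascSet π := by
      intro h
      exact ((not_asc_iff_desc π (by omega)).2 ((desc_eq π 0).1 hd0)) (mem_ascSet.1 h)
    have htop : n - 2 ∉ ascSet π := by
      intro h
      have h1 : n - 2 + 1 < n := by omega
      exact ((not_asc_iff_desc π h1).2 ((desc_eq π (n-2)).1 hdt)) (mem_ascSet.1 h)
    rw [dagger n (ascSet π) hn (ascSet_subset π) hsp h0 htop]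
    rw [dd_eq, dd_eq' hn π hsp h0 htop]
  · rw [if_neg hcls]
    have hbad : (¬ SparseF (ascSet π)) ∨ 0 ∈ ascSet π ∨ n - 2 ∈ ascSet π := by
      by_contra hcon
      push_neg at hcon
      obtain ⟨hsp, h0, htop⟩ := hcon
      apply hcls
      refine ⟨?_, ?_, ?_⟩
      · rintro i ⟨ha1, ha2⟩
        exact hsp i (mem_ascSet.2 ((asc_eq π i).1 ha1))
          (mem_ascSet.2 ((asc_eq π (i+1)).1 ha2))
      · refine (desc_eq π 0).2 ((not_asc_iff_desc π (by omega)).1 ?_)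
        intro ha
        exact h0 (mem_ascSet.2 ha)
      · have h1 : n - 2 + 1 < n := by omega
        refine (desc_eq π (n-2)).2 ((not_asc_iff_desc π h1).1 ?_)
        intro ha
        exact htop (mem_ascSet.2 ha)
    apply Finset.sum_eq_zero
    intro A hA
    split
    next hsub =>
      rcases hbad with hb | hb | hb
      · rw [SparseF] at hb
        push_neg at hb
        obtain ⟨i, hi, hi1⟩ := hb
        exact Efun_adj_mem (hsub hi) (hsub hi1)
      · exact Efun_zero_mem (hsub hb)
      · exact Efun_top_mem hn (Finset.mem_powerset.1 hA) (hsub hb)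
    next => rfl

/-- For n ≥ 2, the number of derangements of [n] equals Σ 2^{dd(π)} over permutations
with no double ascents whose descent word starts and ends with a descent. -/
theorem numDerangements_eq_alphaBB (n : ℕ) (hn : 2 ≤ n) :
    numDerangements n = alphaBB n := by
  rw [alphaBB, Finset.sum_filter, ← M2 n (by omega)]
  have h1 : ∀ A ∈ (range (n-1)).powerset,
      Efun n A * Nfun n A
      = ∑ π ∈ (Finset.univ : Finset (Equiv.Perm (Fin n))),
          (if ascSet π ⊆ A then Efun n A else 0) := by
    intro A _
    rw [Nfun, Finset.card_filter, Finset.mul_sum]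
    apply Finset.sum_congr rfl
    intro π _
    rw [mul_ite, mul_one, mul_zero]
  rw [Finset.sum_congr rfl h1, Finset.sum_comm]
  apply Finset.sum_congr rfl
  intro π _
  have := M3 hn π
  rw [Tsum] at this
  rw [this]
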